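/- The number of good external edges whose colour lies in F is at least ε|F|n/4. -/

import Mathlib

/-
A multigraph on vertex type `V` is given by an edge type `E` with two endpoint
maps `fst snd : E → V` (no loops: `fst e ≠ snd e`); parallel edges are allowed
since distinct elements of `E` may have the same endpoints.  A colouring
`col : E → C` by a set `C` of `n` colours is proper if any two distinct edges
sharing a vertex get distinct colours.
-/

attribute [local instance] Classical.propDecidable

/-- The set of endpoints of an edge. -/
def endpts {V E : Type*} [DecidableEq V] (fst snd : E → V) (e : E) : Finset V :=
  {fst e, snd e}

/-- A set of edges is a rainbow matching: pairwise vertex-disjoint edges with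
pairwise distinct colours. -/
def IsRainbowMatching {V E C : Type*} [DecidableEq V] (fst snd : E → V) (col : E → C)
    (S : Finset E) : Prop :=
  (∀ e ∈ S, ∀ f ∈ S, e ≠ f → endpts fst snd e ∩ endpts fst snd f = ∅) ∧
  (∀ e ∈ S, ∀ f ∈ S, col e = col f → e = f)

/-- `V(M)`: the set of vertices covered by a set of edges `M`. -/
def mVerts {V E : Type*} [DecidableEq V] (fst snd : E → V) (M : Finset E) : Finset V :=
  M.biUnion (endpts fst snd)

/-- The set of colours used by a set of edges `M`. -/
def mCols {E C : Type*} [DecidableEq C] (col : E → C) (M : Finset E) : Finset C :=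
  M.image col

/-- `C₀`: the set of colours not used by `M`. -/
def C0 {E C : Type*} [Fintype C] [DecidableEq C] (col : E → C) (M : Finset E) : Finset C :=
  Finset.univ \ mCols col M

/-- An edge is external if one endpoint is in `V(M)` and the other is outside `V(M)`. -/
def IsExternal {V E : Type*} [DecidableEq V] (fst snd : E → V) (M : Finset E) (e : E) : Prop :=
  (fst e ∈ mVerts fst snd M ∧ snd e ∉ mVerts fst snd M) ∨
  (fst e ∉ mVerts fst snd M ∧ snd e ∈ mVerts fst snd M)

/-- The number of external `C₀`-edges incident to a vertex `v`. -/
noncomputable def extC0deg {V E C : Type*} [DecidableEq V] [Fintype E] [Fintype C]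
    [DecidableEq C] (fst snd : E → V) (col : E → C) (M : Finset E) (v : V) : ℕ :=
  (Finset.univ.filter fun f : E =>
    IsExternal fst snd M f ∧ col f ∈ C0 col M ∧ v ∈ endpts fst snd f).card

/-- `E₀`: the edges of `M` having an endpoint (a possible tail) incident to at least
`α|C₀|` external `C₀`-edges. -/
noncomputable def E0 {V E C : Type*} [DecidableEq V] [Fintype E] [Fintype C] [DecidableEq C]
    (fst snd : E → V) (col : E → C) (M : Finset E) (α : ℝ) : Finset E :=
  M.filter fun e => ∃ v ∈ endpts fst snd e,
    α * ((C0 col M).card : ℝ) ≤ (extC0deg fst snd col M v : ℝ)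

/-- `F`: the set of flexible colours, i.e. the colours of the edges of `E₀`. -/
noncomputable def Fcols {V E C : Type*} [DecidableEq V] [Fintype E] [Fintype C] [DecidableEq C]
    (fst snd : E → V) (col : E → C) (M : Finset E) (α : ℝ) : Finset C :=
  mCols col (E0 fst snd col M α)

/-- A good external edge: an external edge `e` whose colour lies in `F` such that the
edge `m_{c(e)}` of `M` of the same colour is incident to at least `α|C₀|/2` external
`C₀`-edges sharing no endpoint with `e`. -/
noncomputable def IsGood {V E C : Type*} [DecidableEq V] [Fintype E] [Fintype C] [DecidableEq C]
    (fst snd : E → V) (col : E → C) (M : Finset E) (α : ℝ) (e : E) : Prop :=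
  IsExternal fst snd M e ∧ col e ∈ Fcols fst snd col M α ∧
  ∃ g ∈ M, col g = col e ∧
    α * ((C0 col M).card : ℝ) / 2 ≤
      ((Finset.univ.filter fun f : E => IsExternal fst snd M f ∧ col f ∈ C0 col M ∧
        (endpts fst snd f ∩ endpts fst snd g).Nonempty ∧
        endpts fst snd f ∩ endpts fst snd e = ∅).card : ℝ)

/-- The number of good external `F`-edges incident to a vertex `v`. -/
noncomputable def goodDeg {V E C : Type*} [DecidableEq V] [Fintype E] [Fintype C] [DecidableEq C]
    (fst snd : E → V) (col : E → C) (M : Finset E) (α : ℝ) (v : V) : ℕ :=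
  (Finset.univ.filter fun f : E => IsGood fst snd col M α f ∧ v ∈ endpts fst snd f).card

/-- `E₁`: the edges of `M` having an endpoint (a possible tail) incident to at least
`α|F|` good external `F`-edges. -/
noncomputable def E1 {V E C : Type*} [DecidableEq V] [Fintype E] [Fintype C] [DecidableEq C]
    (fst snd : E → V) (col : E → C) (M : Finset E) (α : ℝ) : Finset E :=
  M.filter fun e => ∃ v ∈ endpts fst snd e,
    α * ((Fcols fst snd col M α).card : ℝ) ≤ (goodDeg fst snd col M α v : ℝ)

/-- Given a choice `tl` of tail for each edge, the corresponding head. -/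
def hdOf {V E : Type*} [DecidableEq V] (fst snd : E → V) (tl : E → V) (e : E) : V :=
  if tl e = fst e then snd e else fst e

/-- The endpoint of the edge `f` other than `v` (for `v` an endpoint of `f`). -/
def other {V E : Type*} [DecidableEq V] (fst snd : E → V) (v : V) (f : E) : V :=
  if fst f = v then snd f else fst f

/-- The condition for a vertex `v` to be a possible tail at step `i > 1` of the
reachability algorithm: for some `0 < j < i`, the number of `R_j`-edges `v u` with
`u ∈ V₀ ∪ V₁ ∪ ⋯ ∪ V_{i-1}` is at least `α|R_j|`. -/
noncomputable def reachCond {V E C : Type*} [DecidableEq V] [Fintype V] [Fintype E] [Fintype C]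
    [DecidableEq C] (fst snd : E → V) (col : E → C) (M : Finset E)
    (Vs : ℕ → Finset V) (Rs : ℕ → Finset C) (α : ℝ) (i : ℕ) (v : V) : Prop :=
  ∃ j ∈ Finset.Ioo 0 i, α * ((Rs j).card : ℝ) ≤
    ((Finset.univ.filter fun f : E => v ∈ endpts fst snd f ∧ col f ∈ Rs j ∧
      other fst snd v f ∈ (Finset.univ \ mVerts fst snd M) ∪ (Finset.Ioo 0 i).biUnion Vs).card : ℝ)

/-- The set `T(S)` of twins (matching partners under `M`) of the vertices of `S`. -/
def twins {V E : Type*} [DecidableEq V] (fst snd : E → V) (M : Finset E) (S : Finset V) :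
    Finset V :=
  M.biUnion fun g => (if fst g ∈ S then {snd g} else ∅) ∪ (if snd g ∈ S then {fst g} else ∅)

open Finset in
lemma mem_endpts' {V E : Type*} [DecidableEq V] (fst snd : E → V) (e : E) (v : V) :
    v ∈ endpts fst snd e ↔ v = fst e ∨ v = snd e := by simp [endpts]

open Finset in
lemma endpts_subset_mVerts' {V E : Type*} [DecidableEq V] (fst snd : E → V) {M : Finset E}
    {g : E} (hg : g ∈ M) : endpts fst snd g ⊆ mVerts fst snd M :=
  fun v hv => Finset.mem_biUnion.2 ⟨g, hg, hv⟩

open Finset in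
lemma aug' {V E C : Type*} [DecidableEq V] [DecidableEq C] (fst snd : E → V) (col : E → C)
    {M : Finset E}
    (hloop : ∀ e : E, fst e ≠ snd e)
    (hM : IsRainbowMatching fst snd col M)
    (hMmax : ∀ S : Finset E, IsRainbowMatching fst snd col S → S.card ≤ M.card)
    {g e f : E} {t w : V} (hg : g ∈ M)
    (hce : col e = col g)
    (heOut : endpts fst snd e ∩ mVerts fst snd M = ∅)
    (htf : t ∈ endpts fst snd f) (hwf : w ∈ endpts fst snd f) (htw : t ≠ w)
    (htg : t ∈ endpts fst snd g)
    (hw : w ∉ mVerts fst snd M) (hwe : w ∉ endpts fst snd e)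
    (hcf : col f ∉ mCols col M) : False := by
  classical
  have hef : endpts fst snd f = {t, w} := by
    rw [mem_endpts'] at htf hwf
    rcases htf with h1 | h1 <;> rcases hwf with h2 | h2
    · exact absurd (h1.trans h2.symm) htw
    · rw [endpts, ← h1, ← h2]
    · rw [endpts, ← h1, ← h2, Finset.pair_comm]
    · exact absurd (h1.trans h2.symm) htw
  have htM : t ∈ mVerts fst snd M := endpts_subset_mVerts' fst snd hg htg
  have hnotmV : ∀ v ∈ endpts fst snd e, v ∉ mVerts fst snd M := by
    intro v hv hvM
    exact absurd (Finset.mem_inter.2 ⟨hv, hvM⟩) (by simp [heOut])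
  have hte : t ∉ endpts fst snd e := fun h => hnotmV t h htM
  have hef_ne : e ≠ f := by
    intro h; rw [h, hef] at hte; simp at hte
  have heM : e ∉ M := by
    intro h
    exact hnotmV (fst e) (by simp [mem_endpts']) (endpts_subset_mVerts' fst snd h (by simp [mem_endpts']))
  have hfM : f ∉ M := fun h => hw (endpts_subset_mVerts' fst snd h hwf)
  have hem : ∀ m ∈ M, endpts fst snd e ∩ endpts fst snd m = ∅ := by
    intro m hm
    rw [Finset.eq_empty_iff_forall_notMem]
    intro v hv
    rw [Finset.mem_inter] at hv
    exact hnotmV v hv.1 (endpts_subset_mVerts' fst snd hm hv.2)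
  have hfm : ∀ m ∈ M, m ≠ g → endpts fst snd f ∩ endpts fst snd m = ∅ := by
    intro m hm hmg
    rw [Finset.eq_empty_iff_forall_notMem]
    intro v hv
    rw [Finset.mem_inter, hef, Finset.mem_insert, Finset.mem_singleton] at hv
    rcases hv with ⟨h1 | h1, h2⟩
    · subst h1
      have := hM.1 g hg m hm (Ne.symm hmg)
      exact absurd (Finset.mem_inter.2 ⟨htg, h2⟩) (by simp [this])
    · subst h1; exact hw (endpts_subset_mVerts' fst snd hm h2)
  have hfe : endpts fst snd e ∩ endpts fst snd f = ∅ := by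
    rw [Finset.eq_empty_iff_forall_notMem]
    intro v hv
    rw [Finset.mem_inter, hef, Finset.mem_insert, Finset.mem_singleton] at hv
    rcases hv with ⟨h1, h2 | h2⟩
    · exact hte (h2 ▸ h1)
    · exact hwe (h2 ▸ h1)
  have hcolfM : ∀ m ∈ M, col f ≠ col m := by
    intro m hm h
    exact hcf (h ▸ Finset.mem_image_of_mem col hm)
  set S : Finset E := insert e (insert f (M.erase g)) with hS
  have hmemS : ∀ a, a ∈ S ↔ a = e ∨ a = f ∨ (a ≠ g ∧ a ∈ M) := by
    intro a; simp [hS, Finset.mem_insert, Finset.mem_erase]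
  have hSrm : IsRainbowMatching fst snd col S := by
    constructor
    · intro a ha b hb hab
      rw [hmemS] at ha hb
      rcases ha with rfl | rfl | ⟨hag, haM⟩ <;> rcases hb with rfl | rfl | ⟨hbg, hbM⟩
      · exact absurd rfl hab
      · exact hfe
      · exact hem b hbM
      · rw [Finset.inter_comm]; exact hfe
      · exact absurd rfl hab
      · exact hfm b hbM hbg
      · rw [Finset.inter_comm]; exact hem a haM
      · rw [Finset.inter_comm]; exact hfm a haM hag
      · exact hM.1 a haM b hbM hab
    · intro a ha b hb hab
      rw [hmemS] at ha hb
      rcases ha with rfl | rfl | ⟨hag, haM⟩ <;> rcases hb with rfl | rfl | ⟨hbg, hbM⟩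
      · rfl
      · exact absurd (hab.symm.trans hce) (hcolfM g hg)
      · exact absurd ((hM.2 g hg b hbM (hce.symm.trans hab)).symm) hbg
      · exact absurd (hab.trans hce) (hcolfM g hg)
      · rfl
      · exact absurd hab (hcolfM b hbM)
      · exact absurd (hM.2 a haM g hg (hab.trans hce)) hag
      · exact absurd hab.symm (hcolfM a haM)
      · exact hM.2 a haM b hbM hab
  have hfS : f ∉ M.erase g := fun h => hfM (Finset.mem_of_mem_erase h)
  have heS : e ∉ insert f (M.erase g) := by
    simp only [Finset.mem_insert, Finset.mem_erase]
    rintro (rfl | ⟨-, h⟩)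
    · exact hef_ne rfl
    · exact heM h
  have hcard : S.card = M.card + 1 := by
    rw [hS, Finset.card_insert_of_notMem heS, Finset.card_insert_of_notMem hfS,
      Finset.card_erase_of_mem hg]
    have := Finset.card_pos.2 ⟨g, hg⟩
    omega
  have := hMmax S hSrm
  omega

lemma eq_of_mem_endpts' {V E : Type*} [DecidableEq V] {fst snd : E → V} {f : E} {v1 v2 t : V}
    (h1 : v1 ∈ endpts fst snd f) (h2 : v2 ∈ endpts fst snd f) (h3 : t ∈ endpts fst snd f)
    (n1 : v1 ≠ t) (n2 : v2 ≠ t) : v1 = v2 := by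
  rw [mem_endpts'] at h1 h2 h3
  rcases h1 with rfl|rfl <;> rcases h2 with h|h <;> rcases h3 with h'|h' <;> simp_all

lemma otherEnd' {V E : Type*} [DecidableEq V] {fst snd : E → V} {M : Finset E} {f : E} {t : V}
    (hloop : fst f ≠ snd f) (hext : IsExternal fst snd M f) (htf : t ∈ endpts fst snd f)
    (htM : t ∈ mVerts fst snd M) :
    ∃ w, w ∈ endpts fst snd f ∧ t ≠ w ∧ w ∉ mVerts fst snd M := by
  rw [mem_endpts'] at htf
  rcases htf with rfl | rfl
  · rcases hext with ⟨h1, h2⟩ | ⟨h1, h2⟩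
    · exact ⟨snd f, by simp [mem_endpts'], hloop, h2⟩
    · exact absurd htM h1
  · rcases hext with ⟨h1, h2⟩ | ⟨h1, h2⟩
    · exact absurd htM h2
    · exact ⟨fst f, by simp [mem_endpts'], fun h => hloop h.symm, h1⟩

set_option maxHeartbeats 2000000 in
open Finset in
/-- At least `ε|F|n/4` of the external `F`-edges are good. -/
theorem stmt7
    {V E C : Type*} [Fintype V] [DecidableEq V] [Fintype E] [DecidableEq E]
    [Fintype C] [DecidableEq C]
    (ε k α : ℝ) (hε0 : 0 < ε) (hε1 : ε < 1/1000)
    (hk : k = (2:ℝ) ^ (20/ε)) (hα : α = ε/12)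
    (n : ℕ) (hn : (n:ℝ) > k^2)
    (fst snd : E → V) (col : E → C)
    (hloop : ∀ e : E, fst e ≠ snd e)
    (hproper : ∀ e f : E, e ≠ f → (endpts fst snd e ∩ endpts fst snd f).Nonempty →
      col e ≠ col f)
    (hC : Fintype.card C = n)
    (hmult : ∀ u v : V,
      ((Finset.univ.filter fun e : E => endpts fst snd e = ({u, v} : Finset V)).card : ℝ) ≤ n / k)
    (habund : ∀ c : C, (1+ε) * n ≤ ((Finset.univ.filter fun e : E => col e = c).card : ℝ))
    (M : Finset E) (hM : IsRainbowMatching fst snd col M)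
    (hMmax : ∀ S : Finset E, IsRainbowMatching fst snd col S → S.card ≤ M.card)
    (hMlt : (M.card : ℝ) < n - k)
    :
    ε * ((Fcols fst snd col M α).card : ℝ) * n / 4 ≤
      ((Finset.univ.filter fun e : E => IsGood fst snd col M α e).card : ℝ) := by
  classical
  have hα0 : 0 < α := by rw [hα]; linarith
  -- k is large
  have hx : (20000:ℝ) ≤ 20/ε := by
    rw [le_div_iff₀ hε0]; linarith
  have hk2 : 2 + 24/ε ≤ k := by
    set x : ℝ := 20/ε with hxdef
    have h12 : x/4 ≤ (2:ℝ)^(x/2) := by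
      rw [Real.rpow_def_of_pos (by norm_num : (0:ℝ) < 2)]
      have h1 := Real.add_one_le_exp (Real.log 2 * (x/2))
      have h2 := Real.log_two_gt_d9
      nlinarith
    have hxx : k = (2:ℝ)^(x/2) * (2:ℝ)^(x/2) := by
      rw [hk, ← Real.rpow_add (by norm_num : (0:ℝ) < 2)]
      norm_num
    have h24 : 24/ε = (6/5) * x := by
      rw [hxdef]; field_simp; ring
    have hmul : (x/4) * (x/4) ≤ (2:ℝ)^(x/2) * (2:ℝ)^(x/2) :=
      mul_le_mul h12 h12 (by linarith) (by linarith)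
    rw [hxx, h24]
    nlinarith
  have hk0 : (0:ℝ) < k := by
    have : 0 < 24/ε := by positivity
    linarith
  -- |C0| is big
  have hmColsM : (mCols col M).card ≤ M.card := Finset.card_image_le
  have hmColsn : (mCols col M).card ≤ n := by
    rw [← hC, ← Finset.card_univ]; exact Finset.card_le_univ _
  have hC0card : (C0 col M).card = n - (mCols col M).card := by
    rw [C0, Finset.card_sdiff_of_subset (Finset.subset_univ _), Finset.card_univ, hC]
  set c0 : ℝ := ((C0 col M).card : ℝ) with hc0def
  have hc0ge : (n:ℝ) - M.card ≤ c0 := by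
    rw [hc0def, hC0card, Nat.cast_sub hmColsn]
    have : ((mCols col M).card : ℝ) ≤ (M.card : ℝ) := Nat.cast_le.2 hmColsM
    linarith
  have hc0k : k < c0 := by linarith
  have hc0pos : 0 < c0 := lt_trans hk0 hc0k
  -- |mVerts| ≤ 2|M|
  have hmVcard : (mVerts fst snd M).card ≤ 2 * M.card := by
    refine le_trans Finset.card_biUnion_le ?_
    calc ∑ e ∈ M, (endpts fst snd e).card ≤ ∑ _e ∈ M, 2 := by
          refine Finset.sum_le_sum fun e _ => ?_
          rw [endpts]
          exact le_trans (Finset.card_insert_le _ _) (by simp)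
      _ = 2 * M.card := by rw [Finset.sum_const, smul_eq_mul, mul_comm]
  have hendcard : ∀ e : E, (endpts fst snd e).card = 2 := fun e => Finset.card_pair (hloop e)
  -- the per-colour claim
  have key : ∀ c ∈ Fcols fst snd col M α,
      ε * n / 4 ≤ ((Finset.univ.filter fun e : E =>
        IsGood fst snd col M α e ∧ col e = c).card : ℝ) := by
    intro c hc
    rw [Fcols, mCols] at hc
    obtain ⟨g, hgE0, hgc⟩ := Finset.mem_image.1 hc
    rw [E0, Finset.mem_filter] at hgE0
    obtain ⟨hgM, t, htg, hdeg⟩ := hgE0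
    have htM : t ∈ mVerts fst snd M := endpts_subset_mVerts' fst snd hgM htg
    set At : Finset E := Finset.univ.filter fun f : E =>
      IsExternal fst snd M f ∧ col f ∈ C0 col M ∧ t ∈ endpts fst snd f with hAtdef
    have hAtdeg : (extC0deg fst snd col M t : ℝ) = (At.card : ℝ) := by
      rw [extC0deg, hAtdef]
    rw [hAtdeg] at hdeg
    have hAtC0 : At.card ≤ (C0 col M).card := by
      refine Finset.card_le_card_of_injOn col
        (fun f hf => (Finset.mem_filter.1 hf).2.2.1) ?_
      intro f hf f' hf' hcol
      by_contra hne
      refine hproper f f' hne ⟨t, Finset.mem_inter.2 ⟨?_, ?_⟩⟩ hcol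
      · exact (Finset.mem_filter.1 hf).2.2.2
      · exact (Finset.mem_filter.1 hf').2.2.2
    have hAtne : At.Nonempty := by
      rw [← Finset.card_pos]
      by_contra h
      push_neg at h
      have h0 : At.card = 0 := Nat.le_zero.1 h
      rw [h0] at hdeg
      push_cast at hdeg
      nlinarith
    -- derived facts about non-good external colour-c edges
    have hbadPhi : ∀ e : E, col e = c → IsExternal fst snd M e →
        ¬ IsGood fst snd col M α e →
        α * c0 / 2 < ((At.filter fun f =>
          ¬ (endpts fst snd f ∩ endpts fst snd e = ∅)).card : ℝ) := by
      intro e hec hext hng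
      have hceF : col e ∈ Fcols fst snd col M α := by rw [hec]; exact hc
      rw [IsGood] at hng
      push_neg at hng
      have hlt := hng hext hceF g hgM (hgc.trans hec.symm)
      have hsub : At.filter (fun f => endpts fst snd f ∩ endpts fst snd e = ∅) ⊆
          Finset.univ.filter fun f : E => IsExternal fst snd M f ∧ col f ∈ C0 col M ∧
            (endpts fst snd f ∩ endpts fst snd g).Nonempty ∧
            endpts fst snd f ∩ endpts fst snd e = ∅ := by
        intro f hf
        rw [Finset.mem_filter] at hf
        obtain ⟨hf1, hdisj⟩ := hf
        rw [hAtdef, Finset.mem_filter] at hf1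
        exact Finset.mem_filter.2 ⟨Finset.mem_univ f,
          hf1.2.1, hf1.2.2.1, ⟨t, Finset.mem_inter.2 ⟨hf1.2.2.2, htg⟩⟩, hdisj⟩
      have hcard1 : ((At.filter (fun f =>
          endpts fst snd f ∩ endpts fst snd e = ∅)).card : ℝ) < α * c0 / 2 :=
        lt_of_le_of_lt (Nat.cast_le.2 (Finset.card_le_card hsub)) hlt
      have hsplit := Finset.card_filter_add_card_filter_not
        (s := At) (p := fun f => endpts fst snd f ∩ endpts fst snd e = ∅)
      have : ((At.filter (fun f => endpts fst snd f ∩ endpts fst snd e = ∅)).card : ℝ) +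
          ((At.filter fun f => ¬ (endpts fst snd f ∩ endpts fst snd e = ∅)).card : ℝ) =
          (At.card : ℝ) := by
        push_cast [← hsplit]
        ring
      linarith
    -- the various edge classes of colour c
    set Ic : Finset E := Finset.univ.filter fun e : E => col e = c ∧
      fst e ∈ mVerts fst snd M ∧ snd e ∈ mVerts fst snd M with hIcdef
    set Oc : Finset E := Finset.univ.filter fun e : E => col e = c ∧
      fst e ∉ mVerts fst snd M ∧ snd e ∉ mVerts fst snd M with hOcdef
    set Gc : Finset E := Finset.univ.filter fun e : E =>
      IsGood fst snd col M α e ∧ col e = c with hGcdef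
    set B1 : Finset E := Finset.univ.filter fun e : E => col e = c ∧
      IsExternal fst snd M e ∧ ¬ IsGood fst snd col M α e ∧ t ∈ endpts fst snd e with hB1def
    set B2 : Finset E := Finset.univ.filter fun e : E => col e = c ∧
      IsExternal fst snd M e ∧ ¬ IsGood fst snd col M α e ∧ t ∉ endpts fst snd e with hB2def
    -- pairwise disjointness of endpoints within colour class c
    have hccdisj : ∀ e1 e2 : E, col e1 = c → col e2 = c → e1 ≠ e2 →
        endpts fst snd e1 ∩ endpts fst snd e2 = ∅ := by
      intro e1 e2 h1 h2 hne
      by_contra hd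
      exact hproper e1 e2 hne (Finset.nonempty_iff_ne_empty.2 hd) (h1.trans h2.symm) 
    -- |Ic| ≤ |M|
    have hIc : Ic.card ≤ M.card := by
      have hbU : (Ic.biUnion (endpts fst snd)).card = ∑ e ∈ Ic, (endpts fst snd e).card := by
        refine Finset.card_biUnion ?_
        intro e1 h1 e2 h2 hne
        rw [Function.onFun, Finset.disjoint_iff_inter_eq_empty]
        exact hccdisj e1 e2 (Finset.mem_filter.1 h1).2.1 (Finset.mem_filter.1 h2).2.1 hne
      have hsum : ∑ e ∈ Ic, (endpts fst snd e).card = 2 * Ic.card := by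
        rw [Finset.sum_congr rfl fun e _ => hendcard e, Finset.sum_const, smul_eq_mul, mul_comm]
      have hsubV : Ic.biUnion (endpts fst snd) ⊆ mVerts fst snd M := by
        intro v hv
        obtain ⟨e, he, hve⟩ := Finset.mem_biUnion.1 hv
        obtain ⟨-, -, hf1, hf2⟩ := Finset.mem_filter.1 he
        rw [mem_endpts'] at hve
        rcases hve with rfl | rfl
        · exact hf1
        · exact hf2
      have := Finset.card_le_card hsubV
      omega
    -- |Oc| ≤ 1
    have hOc : Oc.card ≤ 1 := by
      rw [Finset.card_le_one]
      intro e1 h1 e2 h2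
      by_contra hne
      obtain ⟨-, hc1, ho1a, ho1b⟩ := Finset.mem_filter.1 h1
      obtain ⟨-, hc2, ho2a, ho2b⟩ := Finset.mem_filter.1 h2
      have hdisj := hccdisj e1 e2 hc1 hc2 hne
      obtain ⟨f, hf⟩ := hAtne
      obtain ⟨hfext, hfc0, htf⟩ := (Finset.mem_filter.1 hf).2
      obtain ⟨w, hwf, htw, hw⟩ := otherEnd' (hloop f) hfext htf htM
      have hcf : col f ∉ mCols col M := by
        rw [C0, Finset.mem_sdiff] at hfc0
        exact hfc0.2
      have hOut : ∀ e' : E, fst e' ∉ mVerts fst snd M → snd e' ∉ mVerts fst snd M →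
          endpts fst snd e' ∩ mVerts fst snd M = ∅ := by
        intro e' ha hb
        rw [Finset.eq_empty_iff_forall_notMem]
        intro v hv
        rw [Finset.mem_inter, mem_endpts'] at hv
        rcases hv with ⟨rfl | rfl, hvM⟩
        · exact ha hvM
        · exact hb hvM
      have hwor : w ∉ endpts fst snd e1 ∨ w ∉ endpts fst snd e2 := by
        by_contra hcon
        push_neg at hcon
        have : w ∈ endpts fst snd e1 ∩ endpts fst snd e2 :=
          Finset.mem_inter.2 ⟨hcon.1, hcon.2⟩
        rw [hdisj] at this
        simp at this
      rcases hwor with hwe | hwe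
      · exact aug' fst snd col hloop hM hMmax hgM (hc1.trans hgc.symm)
          (hOut e1 ho1a ho1b) htf hwf htw htg hw hwe hcf
      · exact aug' fst snd col hloop hM hMmax hgM (hc2.trans hgc.symm)
          (hOut e2 ho2a ho2b) htf hwf htw htg hw hwe hcf
    -- |B1| ≤ 1
    have hB1 : B1.card ≤ 1 := by
      rw [Finset.card_le_one]
      intro e1 h1 e2 h2
      by_contra hne
      obtain ⟨-, hc1, -, -, ht1⟩ := Finset.mem_filter.1 h1
      obtain ⟨-, hc2, -, -, ht2⟩ := Finset.mem_filter.1 h2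
      have := hccdisj e1 e2 hc1 hc2 hne
      have : t ∈ endpts fst snd e1 ∩ endpts fst snd e2 := Finset.mem_inter.2 ⟨ht1, ht2⟩
      simp_all
    -- |B2| ≤ 2/α via double counting
    have hB2 : (B2.card : ℝ) ≤ 2/α := by
      set Φ : E → Finset E := fun e => At.filter fun f =>
        ¬ (endpts fst snd f ∩ endpts fst snd e = ∅) with hΦdef
      have hΦbound : ∀ e ∈ B2, α * c0 / 2 ≤ ((Φ e).card : ℝ) := by
        intro e he
        obtain ⟨-, hec, hext, hng, -⟩ := Finset.mem_filter.1 he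
        exact (hbadPhi e hec hext hng).le
      have hΦdisj : ∀ e1 ∈ B2, ∀ e2 ∈ B2, e1 ≠ e2 → Disjoint (Φ e1) (Φ e2) := by
        intro e1 h1 e2 h2 hne
        obtain ⟨-, hc1, -, -, ht1⟩ := Finset.mem_filter.1 h1
        obtain ⟨-, hc2, -, -, ht2⟩ := Finset.mem_filter.1 h2
        rw [Finset.disjoint_left]
        intro f hf1 hf2
        obtain ⟨hfA, hd1⟩ := Finset.mem_filter.1 hf1
        obtain ⟨-, hd2⟩ := Finset.mem_filter.1 hf2
        have htf : t ∈ endpts fst snd f := (Finset.mem_filter.1 hfA).2.2.2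
        obtain ⟨v1, hv1⟩ := Finset.nonempty_iff_ne_empty.2 hd1
        obtain ⟨v2, hv2⟩ := Finset.nonempty_iff_ne_empty.2 hd2
        rw [Finset.mem_inter] at hv1 hv2
        have hv1t : v1 ≠ t := fun h => ht1 (h ▸ hv1.2)
        have hv2t : v2 ≠ t := fun h => ht2 (h ▸ hv2.2)
        have hv12 : v1 = v2 := eq_of_mem_endpts' hv1.1 hv2.1 htf hv1t hv2t
        have : v1 ∈ endpts fst snd e1 ∩ endpts fst snd e2 :=
          Finset.mem_inter.2 ⟨hv1.2, hv12 ▸ hv2.2⟩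
        rw [hccdisj e1 e2 hc1 hc2 hne] at this
        simp at this
      have hsum : ∑ e ∈ B2, (Φ e).card = (B2.biUnion Φ).card :=
        (Finset.card_biUnion hΦdisj).symm
      have hUsub : B2.biUnion Φ ⊆ At := by
        intro f hf
        obtain ⟨e, -, hfe⟩ := Finset.mem_biUnion.1 hf
        exact Finset.filter_subset _ _ hfe
      have hUle : (B2.biUnion Φ).card ≤ (C0 col M).card :=
        le_trans (Finset.card_le_card hUsub) hAtC0
      have hstep : (B2.card : ℝ) * (α * c0 / 2) ≤ c0 := by
        have h1 : (B2.card : ℝ) * (α * c0 / 2) ≤ ∑ e ∈ B2, ((Φ e).card : ℝ) := by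
          have := Finset.card_nsmul_le_sum B2 (fun e => ((Φ e).card : ℝ)) (α * c0 / 2) hΦbound
          rwa [nsmul_eq_mul] at this
        have h2 : ∑ e ∈ B2, ((Φ e).card : ℝ) ≤ c0 := by
          rw [← Nat.cast_sum, hsum, hc0def]
          exact_mod_cast hUle
        linarith
      rw [le_div_iff₀ hα0]
      nlinarith
    -- Tc covered by classes
    have hTc : (Finset.univ.filter fun e : E => col e = c) ⊆ ((((Ic ∪ Oc) ∪ Gc) ∪ B1) ∪ B2) := by
      intro e he
      have hec : col e = c := (Finset.mem_filter.1 he).2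
      have hmem : e ∈ Ic ∨ e ∈ Oc ∨ e ∈ Gc ∨ e ∈ B1 ∨ e ∈ B2 := by
        by_cases h1 : fst e ∈ mVerts fst snd M <;> by_cases h2 : snd e ∈ mVerts fst snd M
        · exact Or.inl (Finset.mem_filter.2 ⟨Finset.mem_univ e, hec, h1, h2⟩)
        · have hext : IsExternal fst snd M e := Or.inl ⟨h1, h2⟩
          by_cases hg' : IsGood fst snd col M α e
          · exact Or.inr (Or.inr (Or.inl (Finset.mem_filter.2 ⟨Finset.mem_univ e, hg', hec⟩)))
          · by_cases hte : t ∈ endpts fst snd e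
            · exact Or.inr (Or.inr (Or.inr (Or.inl
                (Finset.mem_filter.2 ⟨Finset.mem_univ e, hec, hext, hg', hte⟩))))
            · exact Or.inr (Or.inr (Or.inr (Or.inr
                (Finset.mem_filter.2 ⟨Finset.mem_univ e, hec, hext, hg', hte⟩))))
        · have hext : IsExternal fst snd M e := Or.inr ⟨h1, h2⟩
          by_cases hg' : IsGood fst snd col M α e
          · exact Or.inr (Or.inr (Or.inl (Finset.mem_filter.2 ⟨Finset.mem_univ e, hg', hec⟩)))
          · by_cases hte : t ∈ endpts fst snd e
            · exact Or.inr (Or.inr (Or.inr (Or.inl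
                (Finset.mem_filter.2 ⟨Finset.mem_univ e, hec, hext, hg', hte⟩))))
            · exact Or.inr (Or.inr (Or.inr (Or.inr
                (Finset.mem_filter.2 ⟨Finset.mem_univ e, hec, hext, hg', hte⟩))))
        · exact Or.inr (Or.inl (Finset.mem_filter.2 ⟨Finset.mem_univ e, hec, h1, h2⟩))
      simp only [Finset.mem_union]
      tauto
    have hTcCard : ((Finset.univ.filter fun e : E => col e = c).card : ℝ) ≤
        (Ic.card : ℝ) + Oc.card + Gc.card + B1.card + B2.card := by
      have h1 := Finset.card_le_card hTc
      have h2 : ((((Ic ∪ Oc) ∪ Gc) ∪ B1) ∪ B2).card ≤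
          Ic.card + Oc.card + Gc.card + B1.card + B2.card := by
        calc ((((Ic ∪ Oc) ∪ Gc) ∪ B1) ∪ B2).card
            ≤ (((Ic ∪ Oc) ∪ Gc) ∪ B1).card + B2.card := Finset.card_union_le _ _
          _ ≤ (((Ic ∪ Oc) ∪ Gc).card + B1.card) + B2.card := by
              have := Finset.card_union_le ((Ic ∪ Oc) ∪ Gc) B1; omega
          _ ≤ ((Ic ∪ Oc).card + Gc.card + B1.card) + B2.card := by
              have := Finset.card_union_le (Ic ∪ Oc) Gc; omega
          _ ≤ Ic.card + Oc.card + Gc.card + B1.card + B2.card := by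
              have := Finset.card_union_le Ic Oc; omega
      exact_mod_cast le_trans h1 h2
    -- assemble
    have habc := habund c
    have hIcR : (Ic.card : ℝ) ≤ (M.card : ℝ) := Nat.cast_le.2 hIc
    have hOcR : (Oc.card : ℝ) ≤ 1 := by exact_mod_cast hOc
    have hB1R : (B1.card : ℝ) ≤ 1 := by exact_mod_cast hB1
    have h2α : 2/α = 24/ε := by rw [hα]; field_simp; norm_num
    have hεn : 0 ≤ ε * n := by positivity
    rw [h2α] at hB2
    linarith
  -- sum over colours
  have hGoodSplit : (Finset.univ.filter fun e : E => IsGood fst snd col M α e) =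
      (Fcols fst snd col M α).biUnion (fun c => Finset.univ.filter fun e : E =>
        IsGood fst snd col M α e ∧ col e = c) := by
    ext e
    simp only [Finset.mem_filter, Finset.mem_biUnion, Finset.mem_univ, true_and]
    constructor
    · intro h
      exact ⟨col e, h.2.1, h, rfl⟩
    · rintro ⟨c, -, h, -⟩
      exact h
  have hdisjc : ∀ c1 ∈ Fcols fst snd col M α, ∀ c2 ∈ Fcols fst snd col M α, c1 ≠ c2 →
      Disjoint (Finset.univ.filter fun e : E => IsGood fst snd col M α e ∧ col e = c1)
        (Finset.univ.filter fun e : E => IsGood fst snd col M α e ∧ col e = c2) := by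
    rintro c1 - c2 - hne
    rw [Finset.disjoint_left]
    intro e h1 h2
    exact hne (((Finset.mem_filter.1 h1).2.2).symm.trans (Finset.mem_filter.1 h2).2.2)
  have hcardEq : ((Finset.univ.filter fun e : E => IsGood fst snd col M α e).card : ℝ) =
      ∑ c ∈ Fcols fst snd col M α, ((Finset.univ.filter fun e : E =>
        IsGood fst snd col M α e ∧ col e = c).card : ℝ) := by
    rw [← Nat.cast_sum, hGoodSplit, Finset.card_biUnion hdisjc]
  have hfinal := Finset.card_nsmul_le_sum (Fcols fst snd col M α)
    (fun c => ((Finset.univ.filter fun e : E =>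
      IsGood fst snd col M α e ∧ col e = c).card : ℝ)) (ε * n / 4) key
  rw [nsmul_eq_mul] at hfinal
  rw [hcardEq]
  calc ε * ((Fcols fst snd col M α).card : ℝ) * n / 4
      = ((Fcols fst snd col M α).card : ℝ) * (ε * n / 4) := by ring
    _ ≤ _ := hfinal
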